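/- Under the stated hypotheses, for every smooth function u : W → ℝ, at every point of W where F = 1 and for all indices l, k: u_{:l·k} − u_{·k:l} = ( P^i_{lk} + Y^i_l y_k + ∂Y^i_l/∂y^k ) u_{·i}. -/

import Mathlib

noncomputable section

/-- A point of the local chart `W ⊆ ℝⁿ × (ℝⁿ ∖ {0})` of `TM ∖ {0}`. -/
abbrev Pt (n : ℕ) := (Fin n → ℝ) × (Fin n → ℝ)

/-- Partial derivative in the `k`-th base (`x`) direction. -/
def pdx {n : ℕ} (k : Fin n) (f : Pt n → ℝ) (z : Pt n) : ℝ :=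
  fderiv ℝ f z (Pi.single k 1, 0)

/-- Partial derivative in the `k`-th fibre (`y`) direction. -/
def pdy {n : ℕ} (k : Fin n) (f : Pt n → ℝ) (z : Pt n) : ℝ :=
  fderiv ℝ f z (0, Pi.single k 1)

/-- The fundamental tensor `g_{ij} = ½ ∂²(F²)/∂y^i∂y^j`. -/
def gF {n : ℕ} (F : Pt n → ℝ) (i j : Fin n) : Pt n → ℝ :=
  fun z => (1 / 2 : ℝ) * pdy i (pdy j (fun w => F w ^ 2)) z

/-- The Cartan tensor `C_{ijk} = ¼ ∂³(F²)/∂y^i∂y^j∂y^k`. -/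
def CF {n : ℕ} (F : Pt n → ℝ) (i j k : Fin n) : Pt n → ℝ :=
  fun z => (1 / 4 : ℝ) * pdy i (pdy j (pdy k (fun w => F w ^ 2))) z

/-- `y_k := g_{kj} y^j`. -/
def ylow {n : ℕ} (F : Pt n → ℝ) (k : Fin n) : Pt n → ℝ :=
  fun z => ∑ j, gF F k j z * z.2 j

/-- `N^i_j := Γ^i_{jk} y^k`. -/
def Nc {n : ℕ} (Γ : Fin n → Fin n → Fin n → Pt n → ℝ) (i j : Fin n) : Pt n → ℝ :=
  fun z => ∑ k, Γ i j k z * z.2 k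

/-- Horizontal derivative of a scalar: `u_{|k} := ∂u/∂x^k − N^p_k ∂u/∂y^p`. -/
def dhS {n : ℕ} (Γ : Fin n → Fin n → Fin n → Pt n → ℝ) (k : Fin n) (u : Pt n → ℝ) :
    Pt n → ℝ :=
  fun z => pdx k u z - ∑ p, Nc Γ p k z * pdy p u z

/-- The Chern curvature contraction `P^i_{lk} := −y^j ∂Γ^i_{jl}/∂y^k`. -/
def Pc {n : ℕ} (Γ : Fin n → Fin n → Fin n → Pt n → ℝ) (i l k : Fin n) : Pt n → ℝ :=
  fun z => -∑ j, z.2 j * pdy k (Γ i j l) z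

/-- The Riemann curvature tensor `R^i_{jkl}` of the connection. -/
def Rfull {n : ℕ} (Γ : Fin n → Fin n → Fin n → Pt n → ℝ) (i j k l : Fin n) :
    Pt n → ℝ :=
  fun z => pdx k (Γ i j l) z - pdx l (Γ i j k) z
    + (∑ m, pdy m (Γ i j k) z * Nc Γ m l z)
    - (∑ m, pdy m (Γ i j l) z * Nc Γ m k z)
    + (∑ m, Γ m j l z * Γ i m k z) - ∑ m, Γ m j k z * Γ i m l z

/-- `R^i_{kl} := y^j R^i_{jkl}`. -/
def Rc {n : ℕ} (Γ : Fin n → Fin n → Fin n → Pt n → ℝ) (i k l : Fin n) : Pt n → ℝ :=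
  fun z => ∑ j, z.2 j * Rfull Γ i j k l z

/-- The Lorentz force `Y^i_j := Ω_{jk} g^{ik}` (with `Ω` a function of `x` only). -/
def Yl {n : ℕ} (Ω : Fin n → Fin n → (Fin n → ℝ) → ℝ)
    (ginv : Fin n → Fin n → Pt n → ℝ) (i j : Fin n) : Pt n → ℝ :=
  fun z => ∑ k, Ω j k z.1 * ginv i k z

/-- Magnetic derivative of a scalar: `u_{:k} := u_{|k} + F Y^j_k u_{·j}`. -/
def dmS {n : ℕ} (F : Pt n → ℝ) (Γ : Fin n → Fin n → Fin n → Pt n → ℝ)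
    (Ω : Fin n → Fin n → (Fin n → ℝ) → ℝ) (ginv : Fin n → Fin n → Pt n → ℝ)
    (k : Fin n) (u : Pt n → ℝ) : Pt n → ℝ :=
  fun z => dhS Γ k u z + F z * ∑ j, Yl Ω ginv j k z * pdy j u z

/-- Horizontal covariant derivative of the Lorentz force:
`Y^i_{j|k} := ∂Y^i_j/∂x^k − N^p_k ∂Y^i_j/∂y^p + Γ^i_{kp} Y^p_j − Γ^p_{kj} Y^i_p`. -/
def Ydh {n : ℕ} (Γ : Fin n → Fin n → Fin n → Pt n → ℝ)
    (Ω : Fin n → Fin n → (Fin n → ℝ) → ℝ) (ginv : Fin n → Fin n → Pt n → ℝ)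
    (i j k : Fin n) : Pt n → ℝ :=
  fun z => pdx k (Yl Ω ginv i j) z - (∑ p, Nc Γ p k z * pdy p (Yl Ω ginv i j) z)
    + (∑ p, Γ i k p z * Yl Ω ginv p j z) - ∑ p, Γ p k j z * Yl Ω ginv i p z

/-- The twisted curvature `R̃^i_{lk}` of the magnetic flow. -/
def Rt {n : ℕ} (F : Pt n → ℝ) (Γ : Fin n → Fin n → Fin n → Pt n → ℝ)
    (Ω : Fin n → Fin n → (Fin n → ℝ) → ℝ) (ginv : Fin n → Fin n → Pt n → ℝ)
    (i l k : Fin n) : Pt n → ℝ :=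
  fun z => Rc Γ i l k z
    + (Ydh Γ Ω ginv i l k z - Ydh Γ Ω ginv i k l z)
    - ((∑ m, Pc Γ i l m z * Yl Ω ginv m k z) - ∑ m, Pc Γ i k m z * Yl Ω ginv m l z)
    + ((∑ j, Yl Ω ginv j l z * pdy j (Yl Ω ginv i k) z)
        - ∑ j, Yl Ω ginv j k z * pdy j (Yl Ω ginv i l) z)
    + ∑ s, ylow F s z * (Yl Ω ginv s k z * Yl Ω ginv i l z
        - Yl Ω ginv s l z * Yl Ω ginv i k z)


/-! ### Auxiliary calculus lemmas -/

section Helpers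

open Filter

variable {E : Type*} [NormedAddCommGroup E] [NormedSpace ℝ E]

lemma pd_add (v : E) {f g : E → ℝ} {z : E} (hf : DifferentiableAt ℝ f z)
    (hg : DifferentiableAt ℝ g z) :
    fderiv ℝ (fun w => f w + g w) z v = fderiv ℝ f z v + fderiv ℝ g z v := by
  rw [fderiv_fun_add hf hg]; rfl

lemma pd_sub (v : E) {f g : E → ℝ} {z : E} (hf : DifferentiableAt ℝ f z)
    (hg : DifferentiableAt ℝ g z) :
    fderiv ℝ (fun w => f w - g w) z v = fderiv ℝ f z v - fderiv ℝ g z v := by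
  rw [fderiv_fun_sub hf hg]; rfl

lemma pd_mul (v : E) {f g : E → ℝ} {z : E} (hf : DifferentiableAt ℝ f z)
    (hg : DifferentiableAt ℝ g z) :
    fderiv ℝ (fun w => f w * g w) z v = f z * fderiv ℝ g z v + g z * fderiv ℝ f z v := by
  rw [fderiv_fun_mul hf hg]; simp [smul_eq_mul]

lemma pd_sum (v : E) {ι : Type*} {s : Finset ι} {f : ι → E → ℝ} {z : E}
    (hf : ∀ i ∈ s, DifferentiableAt ℝ (f i) z) :
    fderiv ℝ (fun w => ∑ i ∈ s, f i w) z v = ∑ i ∈ s, fderiv ℝ (f i) z v := by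
  rw [fderiv_fun_sum hf]; simp

lemma contDiffAt_pd (v : E) {f : E → ℝ} {z : E} (hf : ContDiffAt ℝ (⊤ : ℕ∞) f z) :
    ContDiffAt ℝ (⊤ : ℕ∞) (fun w => fderiv ℝ f w v) z := by
  have h1 : ContDiffAt ℝ (⊤ : ℕ∞) (fderiv ℝ f) z :=
    hf.fderiv_right (m := (⊤:ℕ∞)) (by norm_cast)
  exact (ContinuousLinearMap.apply ℝ ℝ v).contDiff.contDiffAt.comp z h1

lemma diffAt_pd (v : E) {f : E → ℝ} {z : E} (hf : ContDiffAt ℝ (⊤ : ℕ∞) f z) :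
    DifferentiableAt ℝ (fun w => fderiv ℝ f w v) z :=
  (contDiffAt_pd v hf).differentiableAt (by norm_cast)

lemma pd_swap {f : E → ℝ} {z : E} (hf : ContDiffAt ℝ (⊤ : ℕ∞) f z) (v w : E) :
    fderiv ℝ (fun a => fderiv ℝ f a v) z w = fderiv ℝ (fun a => fderiv ℝ f a w) z v := by
  have hev : ∀ᶠ y in nhds z, HasFDerivAt f (fderiv ℝ f y) y := by
    have h2 : ContDiffAt ℝ (2 : ℕ) f z := hf.of_le (by norm_cast)
    have := h2.eventually (by simp)
    filter_upwards [this] with y hy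
    exact (hy.differentiableAt (by norm_num)).hasFDerivAt
  have hf' : HasFDerivAt (fderiv ℝ f) (fderiv ℝ (fderiv ℝ f) z) z :=
    ((hf.fderiv_right (m := (⊤:ℕ∞)) (by norm_cast)).differentiableAt
      (by norm_cast)).hasFDerivAt
  have hsym := second_derivative_symmetric_of_eventually hev hf'
  have key : ∀ a : E, fderiv ℝ (fun b => fderiv ℝ f b a) z
      = (fderiv ℝ (fderiv ℝ f) z).flip a := by
    intro a
    have : (fun b => fderiv ℝ f b a) = fun b => (ContinuousLinearMap.apply ℝ ℝ a) (fderiv ℝ f b) := rfl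
    rw [this, show (fun b => (ContinuousLinearMap.apply ℝ ℝ a) (fderiv ℝ f b))
        = (ContinuousLinearMap.apply ℝ ℝ a) ∘ (fderiv ℝ f) from rfl,
      fderiv_comp z (ContinuousLinearMap.apply ℝ ℝ a).differentiableAt hf'.differentiableAt]
    ext w'
    simp
  rw [key v, key w]
  simpa using hsym w v

lemma diffAt_finset_prod {ι : Type*} {z : E} (s : Finset ι) (f : ι → E → ℝ)
    (h : ∀ i ∈ s, DifferentiableAt ℝ (f i) z) :
    DifferentiableAt ℝ (fun w => ∏ i ∈ s, f i w) z := by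
  classical
  induction s using Finset.induction_on with
  | empty => simpa using differentiableAt_const (1 : ℝ)
  | @insert a s ha ih =>
    simp only [Finset.prod_insert ha]
    exact (h a (Finset.mem_insert_self a s)).mul
      (ih fun i hi => h i (Finset.mem_insert_of_mem hi))

lemma diffAt_det {n : ℕ} {z : E} {M : E → Matrix (Fin n) (Fin n) ℝ}
    (h : ∀ a b, DifferentiableAt ℝ (fun w => M w a b) z) :
    DifferentiableAt ℝ (fun w => (M w).det) z := by
  have hdet : (fun w => (M w).det)
      = fun w => ∑ σ : Equiv.Perm (Fin n),
          ((Equiv.Perm.sign σ : ℤ) : ℝ) * ∏ i, M w (σ i) i := by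
    funext w; rw [Matrix.det_apply']
  rw [hdet]
  apply DifferentiableAt.fun_sum
  intro σ _
  exact (diffAt_finset_prod Finset.univ (fun i w => M w (σ i) i)
    (fun i _ => h (σ i) i)).const_mul _

end Helpers

section PtHelpers

open Filter

lemma expand_dir {n : ℕ} (L : Pt n →L[ℝ] ℝ) (v : Fin n → ℝ) :
    L ((0 : Fin n → ℝ), v) = ∑ j, v j * L ((0 : Fin n → ℝ), Pi.single j 1) := by
  have hv : ((0 : Fin n → ℝ), v) = ∑ j, v j • (((0 : Fin n → ℝ), Pi.single j 1) : Pt n) := by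
    rw [Prod.ext_iff]
    refine ⟨by rw [Prod.fst_sum]; simp, ?_⟩
    rw [Prod.snd_sum]
    simp only [Prod.smul_snd]
    funext i
    simp [Finset.sum_apply, Pi.single_apply]
  rw [hv, map_sum]
  exact Finset.sum_congr rfl fun j _ => by rw [L.map_smul]; simp

lemma euler {n : ℕ} {W : Set (Pt n)} (hW : IsOpen W) {z : Pt n} (hz : z ∈ W)
    {h : Pt n → ℝ} (hd : DifferentiableAt ℝ h z)
    (hhom : ∀ w ∈ W, ∀ t : ℝ, 0 < t → h (w.1, t • w.2) = t * h w) :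
    fderiv ℝ h z ((0 : Fin n → ℝ), z.2) = h z := by
  have hmap : HasDerivAt (fun t : ℝ => ((z.1, t • z.2) : Pt n)) (((0 : Fin n → ℝ), z.2)) 1 := by
    have h2 : HasDerivAt (fun t : ℝ => t • z.2) ((1:ℝ) • z.2) 1 :=
      (hasDerivAt_id (1:ℝ)).smul_const z.2
    simpa using (hasDerivAt_const (1:ℝ) z.1).prodMk h2
  have hcomp : HasDerivAt (fun t : ℝ => h (z.1, t • z.2))
      (fderiv ℝ h z ((0 : Fin n → ℝ), z.2)) 1 := by
    have hz' : ((z.1, (1:ℝ) • z.2) : Pt n) = z := by simp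
    have hfd : HasFDerivAt h (fderiv ℝ h z) ((fun t : ℝ => ((z.1, t • z.2) : Pt n)) 1) := by
      simpa [hz'] using hd.hasFDerivAt
    exact hfd.comp_hasDerivAt 1 hmap
  have heq : (fun t : ℝ => h (z.1, t • z.2)) =ᶠ[nhds (1:ℝ)] fun t => t * h z := by
    have hcont : ContinuousAt (fun t : ℝ => ((z.1, t • z.2) : Pt n)) 1 := by fun_prop
    have h1 : ∀ᶠ t : ℝ in nhds 1, ((z.1, t • z.2) : Pt n) ∈ W := by
      have : W ∈ nhds ((z.1, (1:ℝ) • z.2) : Pt n) := by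
        simpa using hW.mem_nhds hz
      exact hcont.eventually_mem this
    have h2 : ∀ᶠ t : ℝ in nhds 1, (0:ℝ) < t :=
      eventually_gt_nhds one_pos
    filter_upwards [h1, h2] with t _ ht2
    exact hhom z hz t ht2
  have hcomp2 : HasDerivAt (fun t : ℝ => t * h z)
      (fderiv ℝ h z ((0 : Fin n → ℝ), z.2)) 1 := hcomp.congr_of_eventuallyEq heq.symm
  have hstd : HasDerivAt (fun t : ℝ => t * h z) (h z) 1 := by
    simpa using (hasDerivAt_id (1:ℝ)).mul_const (h z)
  exact hcomp2.unique hstd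

lemma pdy_hom {n : ℕ} {W : Set (Pt n)} (hW : IsOpen W)
    (hWcone : ∀ z ∈ W, ∀ t : ℝ, 0 < t → (z.1, t • z.2) ∈ W)
    {G : Pt n → ℝ} (hG : ∀ w ∈ W, DifferentiableAt ℝ G w)
    (hGhom : ∀ w ∈ W, ∀ t : ℝ, 0 < t → G (w.1, t • w.2) = t ^ 2 * G w) (k : Fin n) :
    ∀ z ∈ W, ∀ t : ℝ, 0 < t → pdy k G (z.1, t • z.2) = t * pdy k G z := by
  intro z hz t ht
  set L : Pt n →L[ℝ] Pt n :=
    (ContinuousLinearMap.id ℝ (Fin n → ℝ)).prodMap (t • ContinuousLinearMap.id ℝ (Fin n → ℝ))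
    with hL
  have hLApp : ∀ w : Pt n, L w = (w.1, t • w.2) := fun w => rfl
  have hLz : ((z.1, t • z.2) : Pt n) ∈ W := hWcone z hz t ht
  have hfe : (fun w => t ^ 2 * G w) =ᶠ[nhds z] fun w => G (L w) := by
    filter_upwards [hW.mem_nhds hz] with w hw
    rw [hLApp, hGhom w hw t ht]
  have hcomp : fderiv ℝ (fun w => G (L w)) z = (fderiv ℝ G (L z)).comp L := by
    have : fderiv ℝ (G ∘ L) z = (fderiv ℝ G (L z)).comp (fderiv ℝ (⇑L) z) :=
      fderiv_comp z (hG (L z) (by rw [hLApp]; exact hLz)) L.differentiableAt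
    rw [L.fderiv] at this
    exact this
  have heq : fderiv ℝ (fun w => t ^ 2 * G w) z = (fderiv ℝ G (L z)).comp L := by
    rw [hfe.fderiv_eq, hcomp]
  have hval := congrArg (fun (M : Pt n →L[ℝ] ℝ) => M ((0 : Fin n → ℝ), Pi.single k 1)) heq
  simp only [ContinuousLinearMap.comp_apply] at hval
  have h1 : fderiv ℝ (fun w => t ^ 2 * G w) z ((0 : Fin n → ℝ), Pi.single k 1)
      = t ^ 2 * pdy k G z := by
    rw [fderiv_const_mul (hG z hz)]; rfl
  have h2 : L (((0 : Fin n → ℝ), Pi.single k 1) : Pt n)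
      = t • (((0 : Fin n → ℝ), Pi.single k 1) : Pt n) := by
    rw [hLApp]; simp [Prod.smul_mk]
  rw [h1, h2, (fderiv ℝ G (L z)).map_smul] at hval
  have hLzeq : L z = ((z.1, t • z.2) : Pt n) := hLApp z
  rw [hLzeq] at hval
  have hv2 : t ^ 2 * pdy k G z = t * pdy k G (z.1, t • z.2) := by
    simpa [smul_eq_mul, pdy] using hval
  have := mul_left_cancel₀ (ne_of_gt ht)
    (by linear_combination hv2 : t * (t * pdy k G z) = t * pdy k G (z.1, t • z.2))
  linarith [this]

lemma ylow_key {n : ℕ} {W : Set (Pt n)} (hW : IsOpen W)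
    (hWcone : ∀ z ∈ W, ∀ t : ℝ, 0 < t → (z.1, t • z.2) ∈ W)
    {F : Pt n → ℝ} (hFsmooth : ContDiffOn ℝ (⊤ : ℕ∞) F W)
    (hFhom : ∀ z ∈ W, ∀ t : ℝ, 0 < t → F (z.1, t • z.2) = t * F z) (k : Fin n) :
    ∀ z ∈ W, ylow F k z = F z * pdy k F z := by
  intro z hz
  set G : Pt n → ℝ := fun w => F w ^ 2 with hGdef
  have hFAt : ∀ w ∈ W, ContDiffAt ℝ (⊤ : ℕ∞) F w := fun w hw =>
    hFsmooth.contDiffAt (hW.mem_nhds hw)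
  have hGAt : ∀ w ∈ W, ContDiffAt ℝ (⊤ : ℕ∞) G w := fun w hw => (hFAt w hw).pow 2
  have hGd : ∀ w ∈ W, DifferentiableAt ℝ G w := fun w hw =>
    ((hGAt w hw).differentiableAt (by norm_cast))
  have hGhom : ∀ w ∈ W, ∀ t : ℝ, 0 < t → G (w.1, t • w.2) = t ^ 2 * G w := by
    intro w hw t ht
    simp only [hGdef]
    rw [hFhom w hw t ht]; ring
  have hhom := pdy_hom hW hWcone hGd hGhom k
  have hhd : DifferentiableAt ℝ (pdy k G) z :=
    diffAt_pd ((0 : Fin n → ℝ), Pi.single k 1) (hGAt z hz)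
  have heuler : fderiv ℝ (pdy k G) z ((0 : Fin n → ℝ), z.2) = pdy k G z :=
    euler hW hz hhd hhom
  have hexp : fderiv ℝ (pdy k G) z ((0 : Fin n → ℝ), z.2)
      = ∑ j, z.2 j * fderiv ℝ (pdy k G) z ((0 : Fin n → ℝ), Pi.single j 1) :=
    expand_dir _ _
  have hswap : ∀ j, pdy k (pdy j G) z = pdy j (pdy k G) z := fun j =>
    pd_swap (hGAt z hz) _ _
  have hylow : ylow F k z = (1/2 : ℝ) * pdy k G z := by
    calc ylow F k z = ∑ j, (1/2 : ℝ) * pdy k (pdy j G) z * z.2 j := rfl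
    _ = ∑ j, z.2 j * ((1/2 : ℝ) * pdy j (pdy k G) z) := by
        refine Finset.sum_congr rfl fun j _ => ?_
        rw [hswap j]; ring
    _ = (1/2 : ℝ) * ∑ j, z.2 j * fderiv ℝ (pdy k G) z ((0 : Fin n → ℝ), Pi.single j 1) := by
        rw [Finset.mul_sum]
        refine Finset.sum_congr rfl fun j _ => ?_
        rw [show pdy j (pdy k G) z
          = fderiv ℝ (pdy k G) z ((0 : Fin n → ℝ), Pi.single j 1) from rfl]
        ring
    _ = (1/2 : ℝ) * pdy k G z := by rw [← hexp, heuler]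
  have hGk : pdy k G z = 2 * F z * pdy k F z := by
    have hFd : DifferentiableAt ℝ F z := (hFAt z hz).differentiableAt (by norm_cast)
    have he : pdy k G z = fderiv ℝ (fun w => F w * F w) z ((0 : Fin n → ℝ), Pi.single k 1) := by
      simp only [hGdef, pdy, pow_two]
    rw [he, pd_mul _ hFd hFd]
    show F z * pdy k F z + F z * pdy k F z = 2 * F z * pdy k F z
    ring
  rw [hylow, hGk]; ring

lemma ginv_diffAt {n : ℕ} {W : Set (Pt n)} (hW : IsOpen W) {z : Pt n} (hz : z ∈ W)
    {F : Pt n → ℝ} (hFsmooth : ContDiffOn ℝ (⊤ : ℕ∞) F W)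
    {ginv : Fin n → Fin n → Pt n → ℝ}
    (hginv : ∀ w ∈ W, ∀ i j, ∑ k, gF F i k w * ginv k j w = if i = j then (1:ℝ) else 0)
    (hginv' : ∀ w ∈ W, ∀ i j, ∑ k, ginv i k w * gF F k j w = if i = j then (1:ℝ) else 0)
    (i j : Fin n) : DifferentiableAt ℝ (ginv i j) z := by
  classical
  set M : Pt n → Matrix (Fin n) (Fin n) ℝ := fun w => Matrix.of fun a b => gF F a b w with hM
  have hMdiff : ∀ w ∈ W, ∀ a b, DifferentiableAt ℝ (fun w' => M w' a b) w := by
    intro w hw a b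
    have hGAt : ContDiffAt ℝ (⊤ : ℕ∞) (fun w' => F w' ^ 2) w :=
      (hFsmooth.contDiffAt (hW.mem_nhds hw)).pow 2
    have h1 : ContDiffAt ℝ (⊤ : ℕ∞) (pdy b (fun w' => F w' ^ 2)) w :=
      contDiffAt_pd _ hGAt
    have h2 : DifferentiableAt ℝ (pdy a (pdy b (fun w' => F w' ^ 2))) w :=
      diffAt_pd _ h1
    exact h2.const_mul _
  have hGv : ∀ w ∈ W, (Matrix.of fun a b => ginv a b w) * M w = 1 := by
    intro w hw
    ext a b
    rw [Matrix.mul_apply, Matrix.one_apply]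
    simpa [hM] using hginv' w hw a b
  have hdet : ∀ w ∈ W, (M w).det ≠ 0 := fun w hw =>
    (Matrix.isUnit_det_of_left_inverse (hGv w hw)).ne_zero
  have hform : ∀ w ∈ W, ginv i j w = ((M w).det)⁻¹ * (M w).adjugate i j := by
    intro w hw
    have hinv : (M w)⁻¹ = Matrix.of fun a b => ginv a b w :=
      Matrix.inv_eq_left_inv (hGv w hw)
    have h1 : ginv i j w = (M w)⁻¹ i j := by rw [hinv]; rfl
    rw [h1, Matrix.inv_def, Matrix.smul_apply, Ring.inverse_eq_inv', smul_eq_mul]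
  have hcand : DifferentiableAt ℝ (fun w => ((M w).det)⁻¹ * (M w).adjugate i j) z := by
    have h1 : DifferentiableAt ℝ (fun w => (M w).det) z := diffAt_det (hMdiff z hz)
    have h2 : DifferentiableAt ℝ (fun w => ((M w).det)⁻¹) z := h1.inv (hdet z hz)
    have h3 : DifferentiableAt ℝ (fun w => (M w).adjugate i j) z := by
      have he : (fun w => (M w).adjugate i j)
          = fun w => ((M w).updateRow j (Pi.single i 1)).det := by
        funext w; rw [Matrix.adjugate_apply]
      rw [he]
      apply diffAt_det
      intro a b
      by_cases haj : a = j
      · simp only [Matrix.updateRow_apply, haj, if_pos rfl]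
        exact differentiableAt_const _
      · simp only [Matrix.updateRow_apply, if_neg haj]
        exact hMdiff z hz a b
    exact h2.mul h3
  have hev : (fun w => ((M w).det)⁻¹ * (M w).adjugate i j) =ᶠ[nhds z] ginv i j := by
    filter_upwards [hW.mem_nhds hz] with w hw
    exact (hform w hw).symm
  exact hcand.congr_of_eventuallyEq hev.symm

/-! pdy-level wrappers -/

lemma pdy_add {n : ℕ} (k : Fin n) {f g : Pt n → ℝ} {z : Pt n}
    (hf : DifferentiableAt ℝ f z) (hg : DifferentiableAt ℝ g z) :
    pdy k (fun w => f w + g w) z = pdy k f z + pdy k g z := pd_add _ hf hg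

lemma pdy_sub {n : ℕ} (k : Fin n) {f g : Pt n → ℝ} {z : Pt n}
    (hf : DifferentiableAt ℝ f z) (hg : DifferentiableAt ℝ g z) :
    pdy k (fun w => f w - g w) z = pdy k f z - pdy k g z := pd_sub _ hf hg

lemma pdy_mul {n : ℕ} (k : Fin n) {f g : Pt n → ℝ} {z : Pt n}
    (hf : DifferentiableAt ℝ f z) (hg : DifferentiableAt ℝ g z) :
    pdy k (fun w => f w * g w) z = f z * pdy k g z + g z * pdy k f z := pd_mul _ hf hg

lemma pdy_sum {n : ℕ} (k : Fin n) {ι : Type*} {s : Finset ι} {f : ι → Pt n → ℝ} {z : Pt n}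
    (hf : ∀ i ∈ s, DifferentiableAt ℝ (f i) z) :
    pdy k (fun w => ∑ i ∈ s, f i w) z = ∑ i ∈ s, pdy k (f i) z := pd_sum _ hf

lemma pdy_coord {n : ℕ} (k j : Fin n) (z : Pt n) :
    pdy k (fun w : Pt n => w.2 j) z = if j = k then (1:ℝ) else 0 := by
  set L : Pt n →L[ℝ] ℝ :=
    (ContinuousLinearMap.proj j).comp (ContinuousLinearMap.snd ℝ (Fin n → ℝ) (Fin n → ℝ))
    with hL
  have he : (fun w : Pt n => w.2 j) = ⇑L := rfl
  show fderiv ℝ (fun w : Pt n => w.2 j) z ((0 : Fin n → ℝ), Pi.single k 1) = _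
  rw [he, L.fderiv]
  show (Pi.single k 1 : Fin n → ℝ) j = _
  rw [Pi.single_apply]

lemma coord_diffAt {n : ℕ} (j : Fin n) (z : Pt n) :
    DifferentiableAt ℝ (fun w : Pt n => w.2 j) z :=
  ((ContinuousLinearMap.proj j).comp
    (ContinuousLinearMap.snd ℝ (Fin n → ℝ) (Fin n → ℝ))).differentiableAt

lemma pdy_pdy_swap {n : ℕ} {u : Pt n → ℝ} {z : Pt n}
    (hu : ContDiffAt ℝ (⊤ : ℕ∞) u z) (k p : Fin n) :
    pdy k (pdy p u) z = pdy p (pdy k u) z := pd_swap hu _ _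

lemma pdy_pdx_swap {n : ℕ} {u : Pt n → ℝ} {z : Pt n}
    (hu : ContDiffAt ℝ (⊤ : ℕ∞) u z) (k l : Fin n) :
    pdy k (pdx l u) z = pdx l (pdy k u) z := pd_swap hu _ _

lemma sum_algebra (n : ℕ) (A yl : ℝ) (B C D G T Y YK : Fin n → ℝ) :
    (A - ∑ p, (B p * C p + D p * (T p + G p)))
      + ((1:ℝ) * (∑ j, (Y j * C j + D j * YK j)) + (∑ j, Y j * D j) * yl)
      - ((A - ∑ p, B p * C p - ∑ p, G p * D p) + (1:ℝ) * ∑ j, Y j * C j)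
    = ∑ i, (-T i + Y i * yl + YK i) * D i := by
  simp only [Finset.sum_add_distrib, one_mul, add_mul, neg_mul, mul_add,
    Finset.sum_sub_distrib, Finset.mul_sum, Finset.sum_mul, mul_comm, mul_left_comm]
  ring_nf
  simp only [Finset.sum_neg_distrib]
  ring

end PtHelpers

/-- **Magnetic and vertical derivatives commute up to curvature and the Lorentz
force:** on `{F = 1}`, `u_{:l·k} − u_{·k:l} = (P^i_{lk} + Y^i_l y_k + ∂Y^i_l/∂y^k) u_{·i}`. -/
theorem stmt_9 (n : ℕ) (hn : 1 ≤ n) (W : Set (Pt n)) (hWopen : IsOpen W)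
    (hWy : ∀ z ∈ W, z.2 ≠ 0)
    (hWcone : ∀ z ∈ W, ∀ t : ℝ, 0 < t → (z.1, t • z.2) ∈ W)
    (F : Pt n → ℝ) (hFsmooth : ContDiffOn ℝ (⊤ : ℕ∞) F W)
    (hFpos : ∀ z ∈ W, 0 < F z)
    (hFhom : ∀ z ∈ W, ∀ t : ℝ, 0 < t → F (z.1, t • z.2) = t * F z)
    (ginv : Fin n → Fin n → Pt n → ℝ)
    (hginv : ∀ z ∈ W, ∀ i j, ∑ k, gF F i k z * ginv k j z = if i = j then (1:ℝ) else 0)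
    (hginv' : ∀ z ∈ W, ∀ i j, ∑ k, ginv i k z * gF F k j z = if i = j then (1:ℝ) else 0)
    (Γ : Fin n → Fin n → Fin n → Pt n → ℝ)
    (hΓsmooth : ∀ i j k, ContDiffOn ℝ (⊤ : ℕ∞) (Γ i j k) W)
    (hΓsym : ∀ i j k, ∀ z ∈ W, Γ i j k z = Γ i k j z)
    (Ω : Fin n → Fin n → (Fin n → ℝ) → ℝ)
    (hΩsmooth : ∀ j k, ContDiffOn ℝ (⊤ : ℕ∞) (fun z : Pt n => Ω j k z.1) W)
    (hΩanti : ∀ z ∈ W, ∀ j k, Ω j k z.1 = -Ω k j z.1)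
    (u : Pt n → ℝ) (hu : ContDiffOn ℝ (⊤ : ℕ∞) u W) :
    ∀ z ∈ W, F z = 1 → ∀ l k,
      pdy k (dmS F Γ Ω ginv l u) z
        - ((pdx l (pdy k u) z - (∑ p, Nc Γ p l z * pdy p (pdy k u) z)
              - ∑ p, Γ p l k z * pdy p u z)
            + F z * ∑ j, Yl Ω ginv j l z * pdy j (pdy k u) z)
      = ∑ i, (Pc Γ i l k z + Yl Ω ginv i l z * ylow F k z
          + pdy k (Yl Ω ginv i l) z) * pdy i u z := by
  intro z hz hF1 l k
  classical
  have hmem : W ∈ nhds z := hWopen.mem_nhds hz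
  have huAt : ContDiffAt ℝ (⊤ : ℕ∞) u z := hu.contDiffAt hmem
  have hFAt : ContDiffAt ℝ (⊤ : ℕ∞) F z := hFsmooth.contDiffAt hmem
  have hFd : DifferentiableAt ℝ F z := hFAt.differentiableAt (by norm_cast)
  have hΓd : ∀ a b c, DifferentiableAt ℝ (Γ a b c) z := fun a b c =>
    ((hΓsmooth a b c).contDiffAt hmem).differentiableAt (by norm_cast)
  have hΩd : ∀ a b, DifferentiableAt ℝ (fun w : Pt n => Ω a b w.1) z := fun a b =>
    ((hΩsmooth a b).contDiffAt hmem).differentiableAt (by norm_cast)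
  have hgd : ∀ a b, DifferentiableAt ℝ (ginv a b) z :=
    ginv_diffAt hWopen hz hFsmooth hginv hginv'
  have hYd : ∀ a b, DifferentiableAt ℝ (Yl Ω ginv a b) z := by
    intro a b
    show DifferentiableAt ℝ (fun w => ∑ k', Ω b k' w.1 * ginv a k' w) z
    exact DifferentiableAt.fun_sum fun k' _ => (hΩd b k').fun_mul (hgd a k')
  have hpdyu : ∀ p, DifferentiableAt ℝ (pdy p u) z := fun p => diffAt_pd _ huAt
  have hpdxu : DifferentiableAt ℝ (pdx l u) z := diffAt_pd _ huAt
  have hNcd : ∀ p q, DifferentiableAt ℝ (Nc Γ p q) z := by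
    intro p q
    show DifferentiableAt ℝ (fun w => ∑ j, Γ p q j w * w.2 j) z
    exact DifferentiableAt.fun_sum fun j _ => (hΓd p q j).fun_mul (coord_diffAt j z)
  have hNsumD : DifferentiableAt ℝ (fun w => ∑ p, Nc Γ p l w * pdy p u w) z :=
    DifferentiableAt.fun_sum fun p _ => (hNcd p l).fun_mul (hpdyu p)
  have hSD : DifferentiableAt ℝ (fun w => ∑ j, Yl Ω ginv j l w * pdy j u w) z :=
    DifferentiableAt.fun_sum fun j _ => (hYd j l).fun_mul (hpdyu j)
  have hdhD : DifferentiableAt ℝ (dhS Γ l u) z := by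
    show DifferentiableAt ℝ (fun w => pdx l u w - ∑ p, Nc Γ p l w * pdy p u w) z
    exact hpdxu.sub hNsumD
  -- key scalar identities
  have hFk : pdy k F z = ylow F k z := by
    have h := ylow_key hWopen hWcone hFsmooth hFhom k z hz
    rw [hF1, one_mul] at h
    exact h.symm
  have hNck : ∀ p, pdy k (Nc Γ p l) z
      = (∑ j, z.2 j * pdy k (Γ p l j) z) + Γ p l k z := by
    intro p
    have e0 : pdy k (Nc Γ p l) z = pdy k (fun w => ∑ j, Γ p l j w * w.2 j) z := rfl
    rw [e0, pdy_sum k (fun j _ => (hΓd p l j).fun_mul (coord_diffAt j z))]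
    have e2 : ∀ j : Fin n, pdy k (fun w : Pt n => Γ p l j w * w.2 j) z
        = z.2 j * pdy k (Γ p l j) z + (if j = k then Γ p l j z else 0) := by
      intro j
      rw [pdy_mul k (hΓd p l j) (coord_diffAt j z), pdy_coord k j z]
      by_cases hj : j = k <;> simp [hj] <;> ring
    rw [Finset.sum_congr rfl fun j _ => e2 j, Finset.sum_add_distrib]
    congr 1
    simp
  have hsymd : ∀ i j, pdy k (Γ i j l) z = pdy k (Γ i l j) z := by
    intro i j
    have hev : Γ i j l =ᶠ[nhds z] Γ i l j := by
      filter_upwards [hmem] with w hw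
      exact hΓsym i j l w hw
    show fderiv ℝ (Γ i j l) z _ = fderiv ℝ (Γ i l j) z _
    rw [hev.fderiv_eq]
  have hPc : ∀ i, Pc Γ i l k z = -∑ j, z.2 j * pdy k (Γ i l j) z := by
    intro i
    show -∑ j, z.2 j * pdy k (Γ i j l) z = -∑ j, z.2 j * pdy k (Γ i l j) z
    rw [Finset.sum_congr rfl fun j _ => by rw [hsymd i j]]
  -- expansions of the magnetic derivative
  have hsum1 : pdy k (fun w => ∑ p, Nc Γ p l w * pdy p u w) z
      = ∑ p, (Nc Γ p l z * pdy p (pdy k u) z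
          + pdy p u z * ((∑ j, z.2 j * pdy k (Γ p l j) z) + Γ p l k z)) := by
    rw [pdy_sum k (fun p _ => (hNcd p l).fun_mul (hpdyu p))]
    refine Finset.sum_congr rfl fun p _ => ?_
    rw [pdy_mul k (hNcd p l) (hpdyu p), pdy_pdy_swap huAt k p, hNck p]
  have hsum2 : pdy k (fun w => ∑ j, Yl Ω ginv j l w * pdy j u w) z
      = ∑ j, (Yl Ω ginv j l z * pdy j (pdy k u) z
          + pdy j u z * pdy k (Yl Ω ginv j l) z) := by
    rw [pdy_sum k (fun j _ => (hYd j l).fun_mul (hpdyu j))]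
    refine Finset.sum_congr rfl fun j _ => ?_
    rw [pdy_mul k (hYd j l) (hpdyu j), pdy_pdy_swap huAt k j]
  have hdh : pdy k (dhS Γ l u) z
      = pdx l (pdy k u) z - ∑ p, (Nc Γ p l z * pdy p (pdy k u) z
          + pdy p u z * ((∑ j, z.2 j * pdy k (Γ p l j) z) + Γ p l k z)) := by
    have e0 : pdy k (dhS Γ l u) z
        = pdy k (fun w => pdx l u w - ∑ p, Nc Γ p l w * pdy p u w) z := rfl
    rw [e0, pdy_sub k hpdxu hNsumD, pdy_pdx_swap huAt k l, hsum1]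
  have hdm : pdy k (dmS F Γ Ω ginv l u) z
      = pdy k (dhS Γ l u) z
        + (F z * pdy k (fun w => ∑ j, Yl Ω ginv j l w * pdy j u w) z
          + (∑ j, Yl Ω ginv j l z * pdy j u z) * pdy k F z) := by
    have e0 : pdy k (dmS F Γ Ω ginv l u) z
        = pdy k (fun w => dhS Γ l u w + F w * ∑ j, Yl Ω ginv j l w * pdy j u w) z := rfl
    rw [e0, pdy_add k hdhD (hFd.fun_mul hSD), pdy_mul k hFd hSD]
  -- assemble
  rw [hdm, hdh, hsum2, hFk, hF1]
  rw [show (∑ i, (Pc Γ i l k z + Yl Ω ginv i l z * ylow F k z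
        + pdy k (Yl Ω ginv i l) z) * pdy i u z)
      = ∑ i, (-(∑ j, z.2 j * pdy k (Γ i l j) z) + Yl Ω ginv i l z * ylow F k z
        + pdy k (Yl Ω ginv i l) z) * pdy i u z from
    Finset.sum_congr rfl fun i _ => by rw [hPc i]]
  exact sum_algebra n (pdx l (pdy k u) z) (ylow F k z)
    (fun p => Nc Γ p l z) (fun p => pdy p (pdy k u) z) (fun p => pdy p u z)
    (fun p => Γ p l k z) (fun p => ∑ j, z.2 j * pdy k (Γ p l j) z)
    (fun j => Yl Ω ginv j l z) (fun j => pdy k (Yl Ω ginv j l) z)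


end
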